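/- Let d ≥ 1, k ≥ 1, and let X : [0,t] → ℝ^d (t > 0) be a continuously differentiable path with length ℓ = ∫₀ᵗ ‖X'(u)‖ du, where ‖·‖ is the Euclidean norm on ℝ^d. Then the Euclidean norm of the k-th level of iterated integrals of X is bounded by ℓ^k / k!, i.e. ( Σ_{i₁,…,i_k = 1}^{d} ( S^{(i₁⋯i_k)}_{[0,t]}(X) )² )^{1/2} ≤ ℓ^k / k!. -/

import Mathlib

open MeasureTheory

/-- The open ordered simplex `{ t : Fin n → ℝ | a < t 0 < t 1 < ⋯ < t (n-1) < b }`. -/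
def orderedSimplex (a b : ℝ) (n : ℕ) : Set (Fin n → ℝ) :=
  {t | (∀ i, a < t i ∧ t i < b) ∧ ∀ i j : Fin n, i < j → t i < t j}

/-- The iterated integral `S^{(i₁⋯iₙ)}_{[a,b]}(X)` of a path `X : ℝ → ℝ^d`,
associated with the multi-index `idx`, i.e. the integral of the product of the
derivatives of the indicated components over the ordered simplex.
For `n = 0` this is automatically `1` (integral of the empty product over the
whole one-point space `Fin 0 → ℝ`, which has total measure one). -/
noncomputable def sig {d : ℕ} (X : ℝ → Fin d → ℝ) (a b : ℝ) {n : ℕ}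
    (idx : Fin n → Fin d) : ℝ :=
  ∫ t in orderedSimplex a b n, ∏ i, deriv (fun u => X u (idx i)) (t i)

lemma measurableSet_orderedSimplex (a b : ℝ) (n : ℕ) :
    MeasurableSet (orderedSimplex a b n) := by
  have : orderedSimplex a b n =
      (⋂ i, ({x : Fin n → ℝ | a < x i} ∩ {x | x i < b})) ∩
      ⋂ (i) (j) (_ : i < j), {x : Fin n → ℝ | x i < x j} := by
    ext x
    simp only [orderedSimplex, Set.mem_setOf_eq, Set.mem_inter_iff, Set.mem_iInter]
  rw [this]
  refine MeasurableSet.inter (MeasurableSet.iInter fun i => MeasurableSet.inter ?_ ?_)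
    (MeasurableSet.iInter fun i => MeasurableSet.iInter fun j =>
      MeasurableSet.iInter fun _ => ?_)
  · exact measurableSet_lt measurable_const (measurable_pi_apply i)
  · exact measurableSet_lt (measurable_pi_apply i) measurable_const
  · exact measurableSet_lt (measurable_pi_apply i) (measurable_pi_apply j)

lemma orderedSimplex_subset_Icc (t : ℝ) (k : ℕ) :
    orderedSimplex 0 t k ⊆ Set.Icc (fun _ => (0:ℝ)) (fun _ => t) := by
  intro x hx
  rw [Set.mem_Icc]
  exact ⟨fun i => (hx.1 i).1.le, fun i => (hx.1 i).2.le⟩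

/-- Key symmetrization inequality. -/
lemma simplex_integral_le {k : ℕ} (t : ℝ) {h : ℝ → ℝ} (hc : Continuous h)
    (hpos : ∀ u, 0 ≤ h u) :
    (k.factorial : ℝ) * ∫ x in orderedSimplex 0 t k, ∏ i, h (x i) ≤
      (∫ u in Set.Icc (0:ℝ) t, h u) ^ k := by
  set g : (Fin k → ℝ) → ℝ := fun x => ∏ i, h (x i) with hg
  set C : Set (Fin k → ℝ) := Set.Icc (fun _ => 0) (fun _ => t) with hCdef
  have hgnn : ∀ x, 0 ≤ g x := fun x => Finset.prod_nonneg fun i _ => hpos _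
  have hgc : Continuous g := continuous_finset_prod _ fun i _ => hc.comp (continuous_apply i)
  have hgC : IntegrableOn g C := hgc.continuousOn.integrableOn_compact isCompact_Icc
  have hSm := measurableSet_orderedSimplex 0 t k
  set T : Equiv.Perm (Fin k) → ((Fin k → ℝ) ≃ᵐ (Fin k → ℝ)) :=
    fun σ => MeasurableEquiv.piCongrLeft (fun _ => ℝ) σ with hTdef
  have hTapp : ∀ (σ : Equiv.Perm (Fin k)) (x : Fin k → ℝ) (j : Fin k),
      T σ x j = x (σ.symm j) := by
    intro σ x j
    simp [hTdef, MeasurableEquiv.coe_piCongrLeft, Equiv.piCongrLeft_apply]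
  -- each permuted simplex sits in the cube
  have hsub : ∀ σ : Equiv.Perm (Fin k), (T σ) ⁻¹' orderedSimplex 0 t k ⊆ C := by
    intro σ x hx
    rw [Set.mem_preimage] at hx
    rw [hCdef, Set.mem_Icc]
    constructor <;> intro i
    · have := (hx.1 (σ i)).1
      rw [hTapp, Equiv.symm_apply_apply] at this
      exact le_of_lt this
    · have := (hx.1 (σ i)).2
      rw [hTapp, Equiv.symm_apply_apply] at this
      exact le_of_lt this
  have hmeas : ∀ σ : Equiv.Perm (Fin k), MeasurableSet ((T σ) ⁻¹' orderedSimplex 0 t k) :=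
    fun σ => (T σ).measurable hSm
  have hint : ∀ σ : Equiv.Perm (Fin k), IntegrableOn g ((T σ) ⁻¹' orderedSimplex 0 t k) :=
    fun σ => hgC.mono_set (hsub σ)
  -- the permuted integrals are all equal
  have h1 : ∀ σ : Equiv.Perm (Fin k),
      ∫ x in (T σ) ⁻¹' orderedSimplex 0 t k, g x = ∫ x in orderedSimplex 0 t k, g x := by
    intro σ
    have key := (volume_measurePreserving_piCongrLeft (fun _ => ℝ) σ).setIntegral_preimage_emb
      (MeasurableEquiv.measurableEmbedding _) g (orderedSimplex 0 t k)
    rw [← key]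
    refine setIntegral_congr_fun (hmeas σ) fun x _ => ?_
    show g x = g (T σ x)
    rw [hg]
    calc (∏ i, h (x i)) = ∏ i, h (x (σ.symm i)) :=
          (Equiv.prod_comp σ.symm (fun j => h (x j))).symm
      _ = ∏ i, h (T σ x i) := Finset.prod_congr rfl fun i _ => by rw [hTapp]
  -- disjointness
  have hdisj : Set.Pairwise (↑(Finset.univ : Finset (Equiv.Perm (Fin k))))
      (Function.onFun Disjoint fun σ => (T σ) ⁻¹' orderedSimplex 0 t k) := by
    intro σ _ τ _ hne
    rw [Function.onFun, Set.disjoint_left]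
    rintro x hxσ hxτ
    apply hne
    rw [Set.mem_preimage] at hxσ hxτ
    have hyσ : StrictMono (T σ x) := fun i j hij => hxσ.2 i j hij
    have hyτ : StrictMono (T τ x) := fun i j hij => hxτ.2 i j hij
    have hrange : Set.range (T σ x) = Set.range (T τ x) := by
      have e1 : Set.range (T σ x) = Set.range x := by
        have : (T σ x) = x ∘ σ.symm := funext fun j => hTapp σ x j
        rw [this, Set.range_comp, Equiv.range_eq_univ, Set.image_univ]
      have e2 : Set.range (T τ x) = Set.range x := by
        have : (T τ x) = x ∘ τ.symm := funext fun j => hTapp τ x j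
        rw [this, Set.range_comp, Equiv.range_eq_univ, Set.image_univ]
      rw [e1, e2]
    haveI : WellFoundedLT (Fin k) := inferInstance
    have heq : T σ x = T τ x := (hyσ.range_inj hyτ).1 hrange
    have hxinj : Function.Injective x := by
      intro a b hab
      have : T σ x (σ a) = T σ x (σ b) := by
        rw [hTapp, hTapp, Equiv.symm_apply_apply, Equiv.symm_apply_apply]; exact hab
      exact σ.injective (hyσ.injective this)
    have hsymm : σ.symm = τ.symm := Equiv.ext fun j => hxinj (by
      have := congrFun heq j
      rwa [hTapp, hTapp] at this)
    calc σ = σ.symm.symm := (Equiv.symm_symm σ).symm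
      _ = τ.symm.symm := by rw [hsymm]
      _ = τ := Equiv.symm_symm τ
  -- the cube integral
  have hcube : ∫ x in C, g x = (∫ u in Set.Icc (0:ℝ) t, h u) ^ k := by
    have hind : ∀ x : Fin k → ℝ,
        C.indicator g x = ∏ i, (Set.Icc (0:ℝ) t).indicator h (x i) := by
      intro x
      have hCpi : C = Set.pi Set.univ (fun _ : Fin k => Set.Icc (0:ℝ) t) := by
        rw [hCdef, Set.pi_univ_Icc]
      by_cases hx : x ∈ C
      · rw [Set.indicator_of_mem hx]
        refine (Finset.prod_congr rfl fun i _ => ?_)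
        have : x i ∈ Set.Icc (0:ℝ) t := by
          rw [hCpi] at hx; exact hx i (Set.mem_univ i)
        rw [Set.indicator_of_mem this]
      · rw [Set.indicator_of_notMem hx]
        obtain ⟨i, hi⟩ : ∃ i, x i ∉ Set.Icc (0:ℝ) t := by
          by_contra hcon
          push_neg at hcon
          exact hx (by rw [hCpi]; exact fun i _ => hcon i)
        exact (Finset.prod_eq_zero (Finset.mem_univ i)
          (Set.indicator_of_notMem hi h)).symm
    rw [← integral_indicator measurableSet_Icc]
    calc ∫ x : Fin k → ℝ, C.indicator g x
        = ∫ x : Fin k → ℝ, ∏ i, (Set.Icc (0:ℝ) t).indicator h (x i) := by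
          exact integral_congr_ae (Filter.Eventually.of_forall hind)
      _ = (∫ u : ℝ, (Set.Icc (0:ℝ) t).indicator h u) ^ (Fintype.card (Fin k)) :=
          integral_fintype_prod_eq_pow (ι := Fin k) ((Set.Icc (0:ℝ) t).indicator h)
      _ = (∫ u in Set.Icc (0:ℝ) t, h u) ^ k := by
          rw [integral_indicator measurableSet_Icc, Fintype.card_fin]
  -- put things together
  calc (k.factorial : ℝ) * ∫ x in orderedSimplex 0 t k, g x
      = ∑ _σ : Equiv.Perm (Fin k), ∫ x in orderedSimplex 0 t k, g x := by
        rw [Finset.sum_const, Finset.card_univ, Fintype.card_perm, Fintype.card_fin,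
          nsmul_eq_mul]
    _ = ∑ σ : Equiv.Perm (Fin k), ∫ x in (T σ) ⁻¹' orderedSimplex 0 t k, g x := by
        exact Finset.sum_congr rfl fun σ _ => (h1 σ).symm
    _ = ∫ x in ⋃ σ ∈ (Finset.univ : Finset (Equiv.Perm (Fin k))),
          (T σ) ⁻¹' orderedSimplex 0 t k, g x :=
        (integral_biUnion_finset Finset.univ (fun σ _ => hmeas σ) hdisj
          (fun σ _ => hint σ)).symm
    _ ≤ ∫ x in C, g x := by
        refine setIntegral_mono_set hgC (Filter.Eventually.of_forall hgnn) ?_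
        refine Filter.Eventually.of_forall ?_
        intro x hx
        obtain ⟨σ, -, hxσ⟩ := Set.mem_iUnion₂.mp hx
        exact hsub σ hxσ
    _ = (∫ u in Set.Icc (0:ℝ) t, h u) ^ k := hcube

lemma deriv_comp_proj {d : ℕ} (X : ℝ → EuclideanSpace ℝ (Fin d)) (hX : Differentiable ℝ X)
    (j : Fin d) (u : ℝ) : deriv (fun v => X v j) u = deriv X u j := by
  have h1 : HasDerivAt X (deriv X u) u := (hX u).hasDerivAt
  have h2 := (EuclideanSpace.proj j).hasFDerivAt.comp_hasDerivAt u h1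
  simpa [Function.comp_def] using h2.deriv

theorem stmt_4 {d k : ℕ} (hd : 1 ≤ d) (hk : 1 ≤ k) (t : ℝ) (ht : 0 < t)
    (X : ℝ → EuclideanSpace ℝ (Fin d)) (hX : ContDiff ℝ 1 X)
    (ℓ : ℝ) (hℓ : ℓ = ∫ u in (0:ℝ)..t, ‖deriv X u‖) :
    Real.sqrt (∑ idx : Fin k → Fin d, (sig (fun u i => X u i) 0 t idx) ^ 2) ≤
      ℓ ^ k / (k.factorial : ℝ) := by
  have hXd : Differentiable ℝ X := hX.differentiable one_ne_zero
  have hDc : Continuous (deriv X) := hX.continuous_deriv le_rfl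
  set h : ℝ → ℝ := fun u => ‖deriv X u‖ with hh
  have hhc : Continuous h := hDc.norm
  have hhnn : ∀ u, 0 ≤ h u := fun u => norm_nonneg _
  set S := orderedSimplex 0 t k with hSdef
  have hSm := measurableSet_orderedSimplex 0 t k
  set F : (Fin k → ℝ) → EuclideanSpace ℝ (Fin k → Fin d) :=
    fun x => WithLp.toLp 2 (fun idx => ∏ i, deriv X (x i) (idx i)) with hF
  have hFc : Continuous F := by
    apply (PiLp.continuous_toLp (p := 2) (β := fun _ : Fin k → Fin d => ℝ)).comp
    apply continuous_pi
    intro idx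
    exact continuous_finset_prod _ fun i _ =>
      (EuclideanSpace.proj (idx i)).continuous.comp (hDc.comp (continuous_apply i))
  have hFS : IntegrableOn F S := by
    have : IntegrableOn F (Set.Icc (fun _ => (0:ℝ)) (fun _ => t)) :=
      hFc.continuousOn.integrableOn_compact isCompact_Icc
    exact this.mono_set (orderedSimplex_subset_Icc t k)
  -- identify sig with coordinates of the vector integral
  have hcoord : ∀ idx : Fin k → Fin d,
      sig (fun u i => X u i) 0 t idx = (∫ x in S, F x) idx := by
    intro idx
    have hproj : (∫ x in S, F x) idx = ∫ x in S, F x idx := by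
      have := (EuclideanSpace.proj (𝕜 := ℝ) idx).integral_comp_comm hFS
      simpa using this.symm
    rw [hproj]
    unfold sig
    refine integral_congr_ae (Filter.Eventually.of_forall fun x => ?_)
    exact Finset.prod_congr rfl fun i _ => deriv_comp_proj X hXd (idx i) (x i)
  -- the pointwise norm of F
  have hFnorm : ∀ x : Fin k → ℝ, ‖F x‖ = ∏ i, h (x i) := by
    intro x
    rw [EuclideanSpace.norm_eq]
    have key : ∑ idx : Fin k → Fin d, ‖F x idx‖ ^ 2
        = ∏ i, ∑ j : Fin d, (deriv X (x i) j) ^ 2 := by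
      rw [Finset.prod_univ_sum]
      rw [Fintype.piFinset_univ]
      refine Finset.sum_congr rfl fun idx _ => ?_
      rw [Real.norm_eq_abs, sq_abs]
      show (∏ i, deriv X (x i) (idx i)) ^ 2 = ∏ i, (deriv X (x i) (idx i)) ^ 2
      rw [Finset.prod_pow]
    rw [key]
    have hsq : ∀ i : Fin k, ∑ j : Fin d, (deriv X (x i) j) ^ 2 = h (x i) ^ 2 := by
      intro i
      show ∑ j : Fin d, (deriv X (x i) j) ^ 2 = ‖deriv X (x i)‖ ^ 2
      rw [EuclideanSpace.norm_eq, Real.sq_sqrt (Finset.sum_nonneg fun j _ => sq_nonneg _)]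
      refine Finset.sum_congr rfl fun j _ => ?_
      rw [Real.norm_eq_abs, sq_abs]
    calc Real.sqrt (∏ i, ∑ j : Fin d, (deriv X (x i) j) ^ 2)
        = Real.sqrt ((∏ i, h (x i)) ^ 2) := by
          rw [← Finset.prod_pow]
          exact congrArg Real.sqrt (Finset.prod_congr rfl fun i _ => hsq i)
      _ = ∏ i, h (x i) :=
          Real.sqrt_sq (Finset.prod_nonneg fun i _ => hhnn _)
  -- the length as an Icc integral
  have hℓ' : ∫ u in Set.Icc (0:ℝ) t, h u = ℓ := by
    rw [hℓ, intervalIntegral.integral_of_le ht.le, integral_Icc_eq_integral_Ioc]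
  have hfacpos : (0:ℝ) < (k.factorial : ℝ) := by positivity
  -- main chain
  calc Real.sqrt (∑ idx : Fin k → Fin d, (sig (fun u i => X u i) 0 t idx) ^ 2)
      = ‖∫ x in S, F x‖ := by
        rw [EuclideanSpace.norm_eq]
        refine congrArg Real.sqrt (Finset.sum_congr rfl fun idx _ => ?_)
        rw [hcoord idx, Real.norm_eq_abs, sq_abs]
    _ ≤ ∫ x in S, ‖F x‖ := norm_integral_le_integral_norm F
    _ = ∫ x in S, ∏ i, h (x i) :=
        integral_congr_ae (Filter.Eventually.of_forall fun x => hFnorm x)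
    _ ≤ ℓ ^ k / (k.factorial : ℝ) := by
        rw [le_div_iff₀ hfacpos]
        have := simplex_integral_le t hhc hhnn (k := k)
        rw [hℓ'] at this
        linarith
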